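/- Let R, L, G, C, ℓ be positive reals, T > 0, and let v, i : [0, T] × [0, ℓ] → ℝ be continuously differentiable functions satisfying C ∂_t v + ∂_x i + G v = 0 and L ∂_t i + ∂_x v + R i = 0 on [0, T] × [0, ℓ], together with the homogeneous boundary conditions v(t, 0) = 0 and v(t, ℓ) = 0 for all t ∈ [0, T]. Then with μ = min(R/L, G/C), the Lyapunov function V(t) = (1/2) ∫₀^ℓ (C v(t,x)² + L i(t,x)²) dx decays exponentially: V(t) ≤ V(0) · exp(−2 μ t) for all t ∈ [0, T]. -/

import Mathlib

open MeasureTheory intervalIntegral Metric Set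

private lemma tl_hasDerivAt_fst {f : ℝ × ℝ → ℝ} (hf : ContDiff ℝ 1 f) (t x : ℝ) :
    HasDerivAt (fun τ => f (τ, x)) (fderiv ℝ f (t, x) (1, 0)) t := by
  have h1 : HasDerivAt (fun τ : ℝ => (τ, x)) ((1:ℝ), (0:ℝ)) t :=
    (hasDerivAt_id t).prodMk (hasDerivAt_const t x)
  exact (hf.differentiable one_ne_zero (t, x)).hasFDerivAt.comp_hasDerivAt t h1

private lemma tl_hasDerivAt_snd {f : ℝ × ℝ → ℝ} (hf : ContDiff ℝ 1 f) (t x : ℝ) :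
    HasDerivAt (fun y => f (t, y)) (fderiv ℝ f (t, x) (0, 1)) x := by
  have h1 : HasDerivAt (fun y : ℝ => (t, y)) ((0:ℝ), (1:ℝ)) x :=
    (hasDerivAt_const x t).prodMk (hasDerivAt_id x)
  exact (hf.differentiable one_ne_zero (t, x)).hasFDerivAt.comp_hasDerivAt x h1

private lemma tl_cont_fderiv_apply {f : ℝ × ℝ → ℝ} (hf : ContDiff ℝ 1 f) (w : ℝ × ℝ) :
    Continuous (fun p : ℝ × ℝ => fderiv ℝ f p w) :=
  (hf.continuous_fderiv one_ne_zero).clm_apply continuous_const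

/-- Exponential decay of the Lyapunov function for the Telegrapher's equations with
homogeneous boundary conditions: if `v`, `i` are `C¹`, satisfy
`C ∂_t v + ∂_x i + G v = 0`, `L ∂_t i + ∂_x v + R i = 0` on `[0,T] × [0,ℓ]` and
`v(t,0) = v(t,ℓ) = 0`, then with `μ = min(R/L, G/C)` the Lyapunov function
`V(t) = (1/2)∫₀^ℓ (C v² + L i²) dx` satisfies `V(t) ≤ V(0)·exp(−2μt)` on `[0,T]`. -/
theorem telegrapher_lyapunov_decay (R L G C ℓ T : ℝ)
    (hR : 0 < R) (hL : 0 < L) (hG : 0 < G) (hC : 0 < C) (hℓ : 0 < ℓ) (hT : 0 < T)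
    (v i : ℝ → ℝ → ℝ)
    (hv : ContDiff ℝ 1 (fun p : ℝ × ℝ => v p.1 p.2))
    (hi : ContDiff ℝ 1 (fun p : ℝ × ℝ => i p.1 p.2))
    (hpde₁ : ∀ t ∈ Set.Icc 0 T, ∀ x ∈ Set.Icc 0 ℓ,
      C * deriv (fun τ => v τ x) t + deriv (fun y => i t y) x + G * v t x = 0)
    (hpde₂ : ∀ t ∈ Set.Icc 0 T, ∀ x ∈ Set.Icc 0 ℓ,
      L * deriv (fun τ => i τ x) t + deriv (fun y => v t y) x + R * i t x = 0)
    (hbc0 : ∀ t ∈ Set.Icc 0 T, v t 0 = 0)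
    (hbcℓ : ∀ t ∈ Set.Icc 0 T, v t ℓ = 0) :
    ∀ t ∈ Set.Icc 0 T,
      (1 / 2) * (∫ x in (0:ℝ)..ℓ, (C * v t x ^ 2 + L * i t x ^ 2)) ≤
        ((1 / 2) * ∫ x in (0:ℝ)..ℓ, (C * v 0 x ^ 2 + L * i 0 x ^ 2)) *
          Real.exp (-2 * min (R / L) (G / C) * t) := by
  set μ : ℝ := min (R / L) (G / C) with hμdef
  -- partial derivatives
  set vt : ℝ → ℝ → ℝ := fun s x => fderiv ℝ (fun p : ℝ × ℝ => v p.1 p.2) (s, x) (1, 0) with hvtdef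
  set it : ℝ → ℝ → ℝ := fun s x => fderiv ℝ (fun p : ℝ × ℝ => i p.1 p.2) (s, x) (1, 0) with hitdef
  set vx : ℝ → ℝ → ℝ := fun s x => fderiv ℝ (fun p : ℝ × ℝ => v p.1 p.2) (s, x) (0, 1) with hvxdef
  set ix : ℝ → ℝ → ℝ := fun s x => fderiv ℝ (fun p : ℝ × ℝ => i p.1 p.2) (s, x) (0, 1) with hixdef
  have hvt : ∀ s x : ℝ, HasDerivAt (fun τ => v τ x) (vt s x) s := fun s x =>
    tl_hasDerivAt_fst hv s x
  have hit : ∀ s x : ℝ, HasDerivAt (fun τ => i τ x) (it s x) s := fun s x =>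
    tl_hasDerivAt_fst hi s x
  have hvx : ∀ s x : ℝ, HasDerivAt (fun y => v s y) (vx s x) x := fun s x =>
    tl_hasDerivAt_snd hv s x
  have hix : ∀ s x : ℝ, HasDerivAt (fun y => i s y) (ix s x) x := fun s x =>
    tl_hasDerivAt_snd hi s x
  -- continuity facts
  have hcv : Continuous fun p : ℝ × ℝ => v p.1 p.2 := hv.continuous
  have hci : Continuous fun p : ℝ × ℝ => i p.1 p.2 := hi.continuous
  have hcvt : Continuous fun p : ℝ × ℝ => vt p.1 p.2 := tl_cont_fderiv_apply hv (1, 0)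
  have hcit : Continuous fun p : ℝ × ℝ => it p.1 p.2 := tl_cont_fderiv_apply hi (1, 0)
  have hcvx : Continuous fun p : ℝ × ℝ => vx p.1 p.2 := tl_cont_fderiv_apply hv (0, 1)
  have hcix : Continuous fun p : ℝ × ℝ => ix p.1 p.2 := tl_cont_fderiv_apply hi (0, 1)
  have hcv1 : ∀ s : ℝ, Continuous fun x => v s x := fun s =>
    hcv.comp (Continuous.prodMk_right s)
  have hci1 : ∀ s : ℝ, Continuous fun x => i s x := fun s =>
    hci.comp (Continuous.prodMk_right s)
  have hcvt1 : ∀ s : ℝ, Continuous fun x => vt s x := fun s =>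
    hcvt.comp (Continuous.prodMk_right s)
  have hcit1 : ∀ s : ℝ, Continuous fun x => it s x := fun s =>
    hcit.comp (Continuous.prodMk_right s)
  have hcvx1 : ∀ s : ℝ, Continuous fun x => vx s x := fun s =>
    hcvx.comp (Continuous.prodMk_right s)
  have hcix1 : ∀ s : ℝ, Continuous fun x => ix s x := fun s =>
    hcix.comp (Continuous.prodMk_right s)
  -- pointwise derivative of the integrand in time
  have hFderiv : ∀ s x : ℝ,
      HasDerivAt (fun τ => C * v τ x ^ 2 + L * i τ x ^ 2)
        (2 * C * v s x * vt s x + 2 * L * i s x * it s x) s := by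
    intro s x
    have h1 := (((hvt s x).pow 2).const_mul C).add (((hit s x).pow 2).const_mul L)
    refine h1.congr_deriv ?_
    simp only [Nat.cast_ofNat, pow_one]
    ring
  have hcF' : Continuous fun p : ℝ × ℝ =>
      2 * C * v p.1 p.2 * vt p.1 p.2 + 2 * L * i p.1 p.2 * it p.1 p.2 := by
    exact (((continuous_const.mul hcv).mul hcvt).add ((continuous_const.mul hci).mul hcit))
  -- differentiation under the integral sign
  have hΦ : ∀ s : ℝ,
      HasDerivAt (fun τ => ∫ x in (0:ℝ)..ℓ, (C * v τ x ^ 2 + L * i τ x ^ 2))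
        (∫ x in (0:ℝ)..ℓ, (2 * C * v s x * vt s x + 2 * L * i s x * it s x)) s := by
    intro s
    obtain ⟨M, hM⟩ :=
      ((isCompact_closedBall s 1).prod isCompact_uIcc).exists_bound_of_continuousOn
        (s := closedBall s 1 ×ˢ uIcc (0:ℝ) ℓ) hcF'.continuousOn
    refine (intervalIntegral.hasDerivAt_integral_of_dominated_loc_of_deriv_le
      (F := fun τ x => C * v τ x ^ 2 + L * i τ x ^ 2)
      (F' := fun τ x => 2 * C * v τ x * vt τ x + 2 * L * i τ x * it τ x)
      (bound := fun _ => M) (ball_mem_nhds s one_pos) ?_ ?_ ?_ ?_ ?_ ?_).2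
    · exact Filter.Eventually.of_forall fun τ =>
        ((continuous_const.mul ((hcv1 τ).pow 2)).add (continuous_const.mul ((hci1 τ).pow 2))).aestronglyMeasurable
    · exact ((continuous_const.mul ((hcv1 s).pow 2)).add
        (continuous_const.mul ((hci1 s).pow 2))).intervalIntegrable 0 ℓ
    · exact (((continuous_const.mul (hcv1 s)).mul (hcvt1 s)).add
        ((continuous_const.mul (hci1 s)).mul (hcit1 s))).aestronglyMeasurable
    · refine Filter.Eventually.of_forall fun x hx τ hτ => ?_
      exact hM (τ, x) ⟨ball_subset_closedBall hτ, Ioc_subset_Icc_self hx⟩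
    · exact intervalIntegrable_const
    · exact Filter.Eventually.of_forall fun x _ τ _ => hFderiv τ x
  -- rewrite the derivative on [0,T] using the PDE and the boundary conditions
  have hD_eq : ∀ s ∈ Set.Icc (0:ℝ) T,
      (∫ x in (0:ℝ)..ℓ, (2 * C * v s x * vt s x + 2 * L * i s x * it s x)) =
        - ∫ x in (0:ℝ)..ℓ, (2 * G * v s x ^ 2 + 2 * R * i s x ^ 2) := by
    intro s hs
    have huIcc : uIcc (0:ℝ) ℓ = Set.Icc 0 ℓ := uIcc_of_le hℓ.le
    have hptwise : ∀ x ∈ uIcc (0:ℝ) ℓ,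
        2 * C * v s x * vt s x + 2 * L * i s x * it s x =
          (-2) * (vx s x * i s x + v s x * ix s x) -
            (2 * G * v s x ^ 2 + 2 * R * i s x ^ 2) := by
      intro x hx
      rw [huIcc] at hx
      have e₁ := hpde₁ s hs x hx
      have e₂ := hpde₂ s hs x hx
      rw [(hvt s x).deriv, (hix s x).deriv] at e₁
      rw [(hit s x).deriv, (hvx s x).deriv] at e₂
      have hC' := hC.ne'
      have hL' := hL.ne'
      -- solve for vt and it
      have hvt_eq : vt s x = -(ix s x + G * v s x) / C := by
        field_simp
        linarith
      have hit_eq : it s x = -(vx s x + R * i s x) / L := by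
        field_simp
        linarith
      rw [hvt_eq, hit_eq]
      field_simp
      ring
    rw [intervalIntegral.integral_congr hptwise]
    have hint1 : IntervalIntegrable
        (fun x => (-2 : ℝ) * (vx s x * i s x + v s x * ix s x)) volume 0 ℓ :=
      ((continuous_const.mul (((hcvx1 s).mul (hci1 s)).add
        ((hcv1 s).mul (hcix1 s))))).intervalIntegrable 0 ℓ
    have hint2 : IntervalIntegrable
        (fun x => 2 * G * v s x ^ 2 + 2 * R * i s x ^ 2) volume 0 ℓ :=
      (((continuous_const.mul ((hcv1 s).pow 2))).add
        ((continuous_const.mul ((hci1 s).pow 2)))).intervalIntegrable 0 ℓ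
    rw [intervalIntegral.integral_sub hint1 hint2]
    have hftc : (∫ x in (0:ℝ)..ℓ, (vx s x * i s x + v s x * ix s x)) =
        v s ℓ * i s ℓ - v s 0 * i s 0 := by
      refine intervalIntegral.integral_eq_sub_of_hasDerivAt
        (fun x _ => (hvx s x).mul (hix s x)) ?_
      exact (((hcvx1 s).mul (hci1 s)).add ((hcv1 s).mul (hcix1 s))).intervalIntegrable 0 ℓ
    rw [intervalIntegral.integral_const_mul, hftc, hbc0 s hs, hbcℓ s hs]
    ring
  -- the differential inequality
  have hD_le : ∀ s ∈ Set.Icc (0:ℝ) T,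
      (∫ x in (0:ℝ)..ℓ, (2 * C * v s x * vt s x + 2 * L * i s x * it s x)) ≤
        (-2 * μ) * ∫ x in (0:ℝ)..ℓ, (C * v s x ^ 2 + L * i s x ^ 2) := by
    intro s hs
    rw [hD_eq s hs]
    have hmono : (∫ x in (0:ℝ)..ℓ, (2 * μ) * (C * v s x ^ 2 + L * i s x ^ 2)) ≤
        ∫ x in (0:ℝ)..ℓ, (2 * G * v s x ^ 2 + 2 * R * i s x ^ 2) := by
      refine intervalIntegral.integral_mono_on hℓ.le
        ((continuous_const.mul ((continuous_const.mul ((hcv1 s).pow 2)).add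
          (continuous_const.mul ((hci1 s).pow 2)))).intervalIntegrable 0 ℓ)
        (((continuous_const.mul ((hcv1 s).pow 2)).add
          (continuous_const.mul ((hci1 s).pow 2))).intervalIntegrable 0 ℓ) ?_
      intro x _
      have hμL : μ * L ≤ R := by
        have h1 : μ ≤ R / L := min_le_left _ _
        calc μ * L ≤ (R / L) * L := by nlinarith
          _ = R := by field_simp
      have hμC : μ * C ≤ G := by
        have h1 : μ ≤ G / C := min_le_right _ _
        calc μ * C ≤ (G / C) * C := by nlinarith
          _ = G := by field_simp
      nlinarith [sq_nonneg (v s x), sq_nonneg (i s x)]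
    rw [intervalIntegral.integral_const_mul] at hmono
    nlinarith [hmono]
  -- Grönwall argument: g s = Φ s * exp (2 μ s) is antitone on [0,T]
  have hg : ∀ s : ℝ,
      HasDerivAt (fun τ => (∫ x in (0:ℝ)..ℓ, (C * v τ x ^ 2 + L * i τ x ^ 2)) *
          Real.exp (2 * μ * τ))
        ((∫ x in (0:ℝ)..ℓ, (2 * C * v s x * vt s x + 2 * L * i s x * it s x)) *
            Real.exp (2 * μ * s) +
          (∫ x in (0:ℝ)..ℓ, (C * v s x ^ 2 + L * i s x ^ 2)) *
            (Real.exp (2 * μ * s) * (2 * μ))) s := by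
    intro s
    have hexp : HasDerivAt (fun τ : ℝ => Real.exp (2 * μ * τ))
        (Real.exp (2 * μ * s) * (2 * μ)) s := by
      have := ((hasDerivAt_id s).const_mul (2 * μ)).exp
      simpa [mul_comm] using this
    exact (hΦ s).mul hexp
  have hganti : AntitoneOn (fun τ => (∫ x in (0:ℝ)..ℓ, (C * v τ x ^ 2 + L * i τ x ^ 2)) *
      Real.exp (2 * μ * τ)) (Set.Icc 0 T) := by
    have hgdiff : Differentiable ℝ (fun τ => (∫ x in (0:ℝ)..ℓ,
        (C * v τ x ^ 2 + L * i τ x ^ 2)) * Real.exp (2 * μ * τ)) :=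
      fun s => (hg s).differentiableAt
    refine antitoneOn_of_deriv_nonpos (convex_Icc 0 T) hgdiff.continuous.continuousOn
      hgdiff.differentiableOn ?_
    intro s hs
    rw [interior_Icc] at hs
    rw [(hg s).deriv]
    have hle := hD_le s ⟨hs.1.le, hs.2.le⟩
    have hexp := Real.exp_pos (2 * μ * s)
    nlinarith [mul_le_mul_of_nonneg_right hle hexp.le]
  -- conclude
  intro t ht
  have hkey := hganti (Set.left_mem_Icc.mpr hT.le) ht ht.1
  simp only [mul_zero, Real.exp_zero, mul_one] at hkey
  have hexp := Real.exp_pos (2 * μ * t)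
  have hneg : Real.exp (-2 * μ * t) = (Real.exp (2 * μ * t))⁻¹ := by
    rw [show (-2 : ℝ) * μ * t = -(2 * μ * t) by ring, Real.exp_neg]
  rw [hneg]
  rw [mul_comm ((1:ℝ)/2 * _) _, ← mul_assoc]
  have h2 : (∫ x in (0:ℝ)..ℓ, (C * v t x ^ 2 + L * i t x ^ 2)) ≤
      (Real.exp (2 * μ * t))⁻¹ * ∫ x in (0:ℝ)..ℓ, (C * v 0 x ^ 2 + L * i 0 x ^ 2) := by
    rw [inv_mul_eq_div, le_div_iff₀ hexp]
    linarith [hkey]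
  linarith [h2]
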